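/- Let μ be a Borel probability measure on ℝ with mean 0 and variance 1, and suppose μ((-1-ε, -1+ε) ∪ (1-ε, 1+ε)) ≥ 1 - ε for some ε ∈ (0,1). Then the Lévy distance between μ and the symmetric Bernoulli distribution b = (1/2)δ_{-1} + (1/2)δ_1 is at most (7/2)ε. -/

import Mathlib

open MeasureTheory ProbabilityTheory Set
open scoped ENNReal

/-- The Lévy distance between two probability measures on ℝ, defined via their
cumulative distribution functions. -/
noncomputable def levyDist (μ ν : Measure ℝ) : ℝ :=
  sInf {ε : ℝ | 0 < ε ∧ ∀ x : ℝ,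
    cdf μ (x - ε) - ε ≤ cdf ν x ∧ cdf ν x ≤ cdf μ (x + ε) + ε}

/-- The symmetric Bernoulli distribution `b = (1/2)δ₋₁ + (1/2)δ₁`. -/
noncomputable def bern : Measure ℝ :=
  (2 : ℝ≥0∞)⁻¹ • Measure.dirac (-1) + (2 : ℝ≥0∞)⁻¹ • Measure.dirac 1

instance : IsProbabilityMeasure bern := by
  constructor
  simp only [bern, Measure.coe_add, Measure.coe_smul, Pi.add_apply, Pi.smul_apply,
    Measure.dirac_apply_of_mem (mem_univ _), smul_eq_mul, mul_one]
  rw [ENNReal.inv_two_add_inv_two]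

lemma bern_Iic (x : ℝ) : bern (Iic x) =
    (2 : ℝ≥0∞)⁻¹ * (Iic x).indicator 1 (-1) + (2 : ℝ≥0∞)⁻¹ * (Iic x).indicator 1 1 := by
  simp [bern, Measure.dirac_apply' _ measurableSet_Iic]

lemma cdf_bern (x : ℝ) :
    cdf bern x = if x < -1 then 0 else if x < 1 then 1/2 else 1 := by
  rw [cdf_eq_real, measureReal_def, bern_Iic]
  by_cases h1 : x < -1
  · have h2 : x < 1 := by linarith
    simp [h1, indicator_apply, show ¬ (-1:ℝ) ≤ x from not_le.2 h1,
      show ¬ (1:ℝ) ≤ x from not_le.2 h2]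
  · by_cases h2 : x < 1
    · simp only [h1, h2, if_false, if_true, indicator_apply, mem_Iic,
        show (-1:ℝ) ≤ x from not_lt.1 h1, show ¬ (1:ℝ) ≤ x from not_le.2 h2,
        if_true, if_false, Pi.one_apply, mul_one, mul_zero, add_zero]
      rw [ENNReal.toReal_inv]
      norm_num
    · simp only [h1, h2, if_false, indicator_apply, mem_Iic,
        show (-1:ℝ) ≤ x from not_lt.1 h1, show (1:ℝ) ≤ x from not_lt.1 h2,
        if_true, Pi.one_apply, mul_one]
      rw [ENNReal.inv_two_add_inv_two]
      simp

set_option maxHeartbeats 1600000 in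
theorem levy_dist_le_of_concentration
    (μ : Measure ℝ) [IsProbabilityMeasure μ]
    (hi1 : Integrable (fun x => x) μ) (hi2 : Integrable (fun x => x ^ 2) μ)
    (h1 : ∫ x, x ∂μ = 0) (h2 : ∫ x, x ^ 2 ∂μ = 1)
    (ε : ℝ) (hε : ε ∈ Ioo (0 : ℝ) 1)
    (hconc : (μ (Ioo (-1 - ε) (-1 + ε) ∪ Ioo (1 - ε) (1 + ε))).toReal ≥ 1 - ε) :
    levyDist μ bern ≤ (7 / 2) * ε := by
  obtain ⟨hε0, hε1⟩ := hε
  set A : Set ℝ := Ioo (-1 - ε) (-1 + ε) with hA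
  set B : Set ℝ := Ioo (1 - ε) (1 + ε) with hB
  have mA : MeasurableSet A := measurableSet_Ioo
  have mB : MeasurableSet B := measurableSet_Ioo
  have mAB : MeasurableSet (A ∪ B) := mA.union mB
  have hdisj : Disjoint A B := by
    rw [Set.disjoint_left]
    rintro y ⟨hy1, hy2⟩ ⟨hy3, hy4⟩
    linarith
  set a := (μ A).toReal with ha_def
  set b := (μ B).toReal with hb_def
  have ha0 : 0 ≤ a := ENNReal.toReal_nonneg
  have hb0 : 0 ≤ b := ENNReal.toReal_nonneg
  have hunion : (μ (A ∪ B)).toReal = a + b := by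
    rw [measure_union hdisj mB, ENNReal.toReal_add (measure_ne_top μ A) (measure_ne_top μ B)]
  have hab_ge : a + b ≥ 1 - ε := hunion ▸ hconc
  have hab_le : a + b ≤ 1 := by
    rw [← hunion]
    have := ENNReal.toReal_mono ENNReal.one_ne_top (prob_le_one (μ := μ) (s := A ∪ B))
    simpa using this
  set c := (μ (A ∪ B)ᶜ).toReal with hc_def
  have hcompl : c = 1 - (a + b) := by
    rw [hc_def, prob_compl_eq_one_sub mAB,
      ENNReal.toReal_sub_of_le prob_le_one ENNReal.one_ne_top, ENNReal.toReal_one, hunion]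
  have hc_le : c ≤ ε := by rw [hcompl]; linarith
  -- integral decomposition
  have hsplit : ∫ x in A, x ∂μ + ∫ x in B, x ∂μ + ∫ x in (A ∪ B)ᶜ, x ∂μ = 0 := by
    rw [← setIntegral_union hdisj mB hi1.integrableOn hi1.integrableOn,
      integral_add_compl mAB hi1, h1]
  have hconstInt : ∀ (r : ℝ) (s : Set ℝ), IntegrableOn (fun _ : ℝ => r) s μ :=
    fun r s => integrableOn_const (measure_lt_top μ s).ne
  have hIA_ub : ∫ x in A, x ∂μ ≤ (-1 + ε) * a := by
    calc ∫ x in A, x ∂μ ≤ ∫ _ in A, (-1 + ε) ∂μ :=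
          setIntegral_mono_on hi1.integrableOn (hconstInt _ _) mA (fun y hy => hy.2.le)
      _ = (-1 + ε) * a := by rw [setIntegral_const, smul_eq_mul, mul_comm, measureReal_def, ← ha_def]
  have hIA_lb : (-1 - ε) * a ≤ ∫ x in A, x ∂μ := by
    calc (-1 - ε) * a = ∫ _ in A, (-1 - ε) ∂μ := by
          rw [setIntegral_const, smul_eq_mul, mul_comm, measureReal_def, ← ha_def]
      _ ≤ ∫ x in A, x ∂μ :=
          setIntegral_mono_on (hconstInt _ _) hi1.integrableOn mA (fun y hy => hy.1.le)
  have hIB_lb : (1 - ε) * b ≤ ∫ x in B, x ∂μ := by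
    calc (1 - ε) * b = ∫ _ in B, (1 - ε) ∂μ := by
          rw [setIntegral_const, smul_eq_mul, mul_comm, measureReal_def, ← hb_def]
      _ ≤ ∫ x in B, x ∂μ :=
          setIntegral_mono_on (hconstInt _ _) hi1.integrableOn mB (fun y hy => hy.1.le)
  have hIB_ub : ∫ x in B, x ∂μ ≤ (1 + ε) * b := by
    calc ∫ x in B, x ∂μ ≤ ∫ _ in B, (1 + ε) ∂μ :=
          setIntegral_mono_on hi1.integrableOn (hconstInt _ _) mB (fun y hy => hy.2.le)
      _ = (1 + ε) * b := by rw [setIntegral_const, smul_eq_mul, mul_comm, measureReal_def, ← hb_def]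
  -- second moment bounds
  have hsq_lb : (1 - ε) ^ 2 * (a + b) ≤ ∫ x in A ∪ B, x ^ 2 ∂μ := by
    calc (1 - ε) ^ 2 * (a + b) = ∫ _ in A ∪ B, (1 - ε) ^ 2 ∂μ := by
          rw [setIntegral_const, smul_eq_mul, mul_comm, measureReal_def, hunion]
      _ ≤ ∫ x in A ∪ B, x ^ 2 ∂μ := by
          refine setIntegral_mono_on (hconstInt _ _) hi2.integrableOn mAB (fun y hy => ?_)
          rcases hy with hy | hy
          · obtain ⟨hy1, hy2⟩ := hy; nlinarith
          · obtain ⟨hy1, hy2⟩ := hy; nlinarith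
  have hsq_split : ∫ x in A ∪ B, x ^ 2 ∂μ + ∫ x in (A ∪ B)ᶜ, x ^ 2 ∂μ = 1 := by
    rw [integral_add_compl mAB hi2, h2]
  have hC2_nonneg : 0 ≤ ∫ x in (A ∪ B)ᶜ, x ^ 2 ∂μ :=
    setIntegral_nonneg mAB.compl (fun y _ => sq_nonneg y)
  have hC2_le : ∫ x in (A ∪ B)ᶜ, x ^ 2 ∂μ ≤ 3 * ε := by
    nlinarith [mul_nonneg (sq_nonneg (1 - ε)) (sub_nonneg.2 hab_ge.le)]
  -- bound on the first moment over the complement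
  have habs : |∫ x in (A ∪ B)ᶜ, x ∂μ| ≤ (c + ∫ x in (A ∪ B)ᶜ, x ^ 2 ∂μ) / 2 := by
    have e1 : |∫ x in (A ∪ B)ᶜ, x ∂μ| ≤ ∫ x in (A ∪ B)ᶜ, |x| ∂μ := by
      simpa [Real.norm_eq_abs] using
        norm_integral_le_integral_norm (μ := μ.restrict (A ∪ B)ᶜ) (fun x : ℝ => x)
    have hi3 : Integrable (fun x : ℝ => (1 + x ^ 2) / 2) μ :=
      ((integrable_const (1 : ℝ)).add hi2).div_const 2
    have e2 : ∫ x in (A ∪ B)ᶜ, |x| ∂μ ≤ ∫ x in (A ∪ B)ᶜ, (1 + x ^ 2) / 2 ∂μ := by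
      refine setIntegral_mono_on hi1.abs.integrableOn hi3.integrableOn mAB.compl
        (fun y _ => ?_)
      nlinarith [sq_nonneg (|y| - 1), sq_abs y, abs_nonneg y]
    have e3 : ∫ x in (A ∪ B)ᶜ, (1 + x ^ 2) / 2 ∂μ
        = (c + ∫ x in (A ∪ B)ᶜ, x ^ 2 ∂μ) / 2 := by
      rw [integral_div, integral_add (hconstInt 1 _) hi2.integrableOn, setIntegral_const,
        smul_eq_mul, mul_one, measureReal_def, ← hc_def]
    linarith
  have hIC_bound : |∫ x in (A ∪ B)ᶜ, x ∂μ| ≤ 2 * ε := by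
    have : (c + ∫ x in (A ∪ B)ᶜ, x ^ 2 ∂μ) / 2 ≤ 2 * ε := by linarith
    linarith
  obtain ⟨hIC_lb, hIC_ub⟩ := abs_le.1 hIC_bound
  -- key mass lower bounds
  have hprod : 0 ≤ (1 - ε) * (a + b - (1 - ε)) :=
    mul_nonneg (by linarith) (by linarith)
  have ha_lb : 1 / 2 - 2 * ε ≤ a := by nlinarith [hprod]
  have hb_lb : 1 / 2 - 2 * ε ≤ b := by nlinarith [hprod]
  -- CDF estimates
  have toReal_mono' : ∀ {s t : Set ℝ}, s ⊆ t → (μ s).toReal ≤ (μ t).toReal :=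
    fun hst => ENNReal.toReal_mono (measure_ne_top μ _) (measure_mono hst)
  have Fub1 : ∀ t : ℝ, t ≤ -1 - ε → cdf μ t ≤ ε := by
    intro t ht
    rw [cdf_eq_real, measureReal_def]
    have hsub : Iic t ⊆ (A ∪ B)ᶜ := by
      intro y hy
      simp only [mem_Iic] at hy
      rintro (⟨h1', h2'⟩ | ⟨h1', h2'⟩) <;> linarith
    exact le_trans (toReal_mono' hsub) hc_le
  have hBc : (μ Bᶜ).toReal = 1 - b := by
    rw [prob_compl_eq_one_sub mB,
      ENNReal.toReal_sub_of_le prob_le_one ENNReal.one_ne_top, ENNReal.toReal_one]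
  have Fub2 : ∀ t : ℝ, t ≤ 1 - ε → cdf μ t ≤ 1 - b := by
    intro t ht
    rw [cdf_eq_real, measureReal_def]
    have hsub : Iic t ⊆ Bᶜ := by
      intro y hy
      simp only [mem_Iic] at hy
      rintro ⟨h1', h2'⟩
      linarith
    exact le_trans (toReal_mono' hsub) hBc.le
  have Flb1 : ∀ t : ℝ, -1 + ε ≤ t → a ≤ cdf μ t := by
    intro t ht
    rw [cdf_eq_real, measureReal_def]
    refine toReal_mono' (fun y hy => ?_)
    obtain ⟨h1', h2'⟩ := hy
    simp only [mem_Iic]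
    linarith
  have Flb2 : ∀ t : ℝ, 1 + ε ≤ t → 1 - ε ≤ cdf μ t := by
    intro t ht
    rw [cdf_eq_real, measureReal_def]
    refine le_trans hconc.le (le_trans (le_of_eq rfl) (toReal_mono' (fun y hy => ?_)))
    simp only [mem_Iic]
    rcases hy with ⟨h1', h2'⟩ | ⟨h1', h2'⟩ <;> linarith
  -- membership of (7/2)ε in the defining set
  have key : (7 / 2 : ℝ) * ε ∈ {ε' : ℝ | 0 < ε' ∧ ∀ x : ℝ,
      cdf μ (x - ε') - ε' ≤ cdf bern x ∧ cdf bern x ≤ cdf μ (x + ε') + ε'} := by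
    refine ⟨by linarith, fun x => ?_⟩
    rw [cdf_bern]
    split_ifs with hx1 hx2
    · constructor
      · have := Fub1 (x - 7 / 2 * ε) (by linarith)
        linarith
      · have := cdf_nonneg μ (x + 7 / 2 * ε)
        linarith
    · constructor
      · have := Fub2 (x - 7 / 2 * ε) (by linarith)
        linarith
      · have := Flb1 (x + 7 / 2 * ε) (by linarith)
        linarith
    · constructor
      · have := cdf_le_one μ (x - 7 / 2 * ε)
        linarith
      · have := Flb2 (x + 7 / 2 * ε) (by linarith)
        linarith
  exact csInf_le ⟨0, fun y hy => hy.1.le⟩ key
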